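/- If λ ≠ 1, then the derivative of the quadratic functional q vanishes at H ∈ W if and only if H = K; that is, H = K is the unique critical point of q on the space W of tensors antisymmetric in their first two indices. -/

import Mathlib

open Finset

noncomputable section

/- Index set {0,1,2,3}. -/
abbrev Idx := Fin 4

/-- The Minkowski metric η_{ab} = diag(−1,1,1,1) (which equals its inverse η^{ab}). -/
def ηm (a b : Idx) : ℝ := if a = b then (if a = (0 : Idx) then -1 else 1) else 0

/- Rank-3 tensors H_{abc} (all indices lowered). -/
abbrev T3 := Idx → Idx → Idx → ℝ

/-- Raising all three indices: H^{abc} = η^{aa'} η^{bb'} η^{cc'} H_{a'b'c'}. -/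
def up3 (H : T3) (a b c : Idx) : ℝ :=
  ∑ a', ∑ b', ∑ c', ηm a a' * ηm b b' * ηm c c' * H a' b' c'

/-- Total antisymmetrization H_{[abc]} with weight 1/3!. -/
def asym (H : T3) (a b c : Idx) : ℝ :=
  (H a b c - H a c b + H b c a - H b a c + H c a b - H c b a) / 6

/-- The contraction H^a{}_{ca} (free index c): η^{aa'} H_{a'ca}. -/
def tr1 (H : T3) (c : Idx) : ℝ := ∑ a, ∑ a', ηm a a' * H a' c a

/-- The contraction H^{cb}{}_b (free index c): η^{cc'} η^{bb'} H_{c'b'b}. -/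
def tr2 (H : T3) (c : Idx) : ℝ := ∑ b, ∑ c', ∑ b', ηm c c' * ηm b b' * H c' b' b

/-- The quadratic functional
`q(H) = H^{abc}(H_{cba} − 2K_{cba}) + H^a{}_{ca}(H^{cb}{}_b − 2K^{cb}{}_b)
        + λ H^{[abc]}(H_{[abc]} − 2K_{[abc]})`. -/
def qfun (lam : ℝ) (K H : T3) : ℝ :=
  (∑ a, ∑ b, ∑ c, up3 H a b c * (H c b a - 2 * K c b a))
  + (∑ c, tr1 H c * (tr2 H c - 2 * tr2 K c))
  + lam * ∑ a, ∑ b, ∑ c,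
      up3 (fun x y z => asym H x y z) a b c * (asym H a b c - 2 * asym K a b c)

/-- `W`: the space of rank-3 tensors antisymmetric in their first two indices. -/
def Wsub : Submodule ℝ T3 where
  carrier := {H | ∀ a b c, H a b c = -H b a c}
  add_mem' := by
    intro x y hx hy a b c
    simp only [Pi.add_apply]
    rw [hx a b c, hy a b c]; ring
  zero_mem' := by intro a b c; simp
  smul_mem' := by
    intro r x hx a b c
    simp only [Pi.smul_apply, smul_eq_mul]
    rw [hx a b c]; ring


/-! ### Auxiliary development -/

/-- Signs of the diagonal Minkowski metric. -/
def ee (a : Idx) : ℝ := if a = 0 then -1 else 1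

lemma sum_eta (x : Idx) (f : Idx → ℝ) : (∑ y, ηm x y * f y) = ee x * f x := by
  rw [Finset.sum_eq_single x]
  · simp [ηm, ee]
  · intro b _ hb
    simp [ηm, (Ne.symm hb : ¬ x = b)]
  · simp

lemma up3_eq (H : T3) (a b c : Idx) : up3 H a b c = ee a * ee b * ee c * H a b c := by
  have h1 : up3 H a b c = ∑ a', ηm a a' * ∑ b', ηm b b' * ∑ c', ηm c c' * H a' b' c' := by
    simp only [up3, Finset.mul_sum]
    apply Finset.sum_congr rfl; intro a' _
    apply Finset.sum_congr rfl; intro b' _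
    apply Finset.sum_congr rfl; intro c' _
    ring
  rw [h1, sum_eta, sum_eta, sum_eta]; ring

lemma tr1_eq (H : T3) (c : Idx) : tr1 H c = ∑ a, ee a * H a c a := by
  unfold tr1
  apply Finset.sum_congr rfl; intro a _
  rw [sum_eta]

lemma tr2_eq (H : T3) (c : Idx) : tr2 H c = ee c * ∑ b, ee b * H c b b := by
  unfold tr2
  rw [Finset.mul_sum]
  apply Finset.sum_congr rfl; intro b _
  have h1 : (∑ c', ∑ b', ηm c c' * ηm b b' * H c' b' b)
      = ∑ c', ηm c c' * ∑ b', ηm b b' * H c' b' b := by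
    apply Finset.sum_congr rfl; intro c' _
    rw [Finset.mul_sum]
    apply Finset.sum_congr rfl; intro b' _
    ring
  rw [h1, sum_eta, sum_eta]

/-- The bilinear form underlying `qfun`, written with explicit metric signs. -/
def Cb (lam : ℝ) (X Y : T3) : ℝ :=
  (∑ a, ∑ b, ∑ c, ee a * ee b * ee c * X a b c * Y c b a)
  + (∑ c, (∑ a, ee a * X a c a) * (ee c * ∑ b, ee b * Y c b b))
  + lam * ∑ a, ∑ b, ∑ c, ee a * ee b * ee c * asym X a b c * asym Y a b c

set_option maxHeartbeats 4000000 in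
lemma qfun_eq (lam : ℝ) (K H : T3) : qfun lam K H = Cb lam H H - 2 * Cb lam H K := by
  simp only [qfun, Cb, up3_eq, tr1_eq, tr2_eq, asym, Fin.sum_univ_four]
  ring

set_option maxHeartbeats 4000000 in
lemma Cb_add_left (lam : ℝ) (X X' Y : T3) :
    Cb lam (X + X') Y = Cb lam X Y + Cb lam X' Y := by
  simp only [Cb, asym, Pi.add_apply, Fin.sum_univ_four]
  ring

set_option maxHeartbeats 4000000 in
lemma Cb_smul_left (lam r : ℝ) (X Y : T3) :
    Cb lam (r • X) Y = r * Cb lam X Y := by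
  simp only [Cb, asym, Pi.smul_apply, smul_eq_mul, Fin.sum_univ_four]
  ring

set_option maxHeartbeats 4000000 in
lemma Cb_add_right (lam : ℝ) (X Y Y' : T3) :
    Cb lam X (Y + Y') = Cb lam X Y + Cb lam X Y' := by
  simp only [Cb, asym, Pi.add_apply, Fin.sum_univ_four]
  ring

set_option maxHeartbeats 4000000 in
lemma Cb_smul_right (lam r : ℝ) (X Y : T3) :
    Cb lam X (r • Y) = r * Cb lam X Y := by
  simp only [Cb, asym, Pi.smul_apply, smul_eq_mul, Fin.sum_univ_four]
  ring

set_option maxHeartbeats 4000000 in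
lemma Cb_symm (lam : ℝ) (X Y : T3) (hX : ∀ a b c, X a b c = -X b a c)
    (hY : ∀ a b c, Y a b c = -Y b a c) : Cb lam X Y = Cb lam Y X := by
  have t2 : (∑ c, (∑ a, ee a * X a c a) * (ee c * ∑ b, ee b * Y c b b))
      = ∑ c, (∑ a, ee a * Y a c a) * (ee c * ∑ b, ee b * X c b b) := by
    apply Finset.sum_congr rfl; intro c _
    have hx : (∑ a, ee a * X a c a) = -∑ a, ee a * X c a a := by
      rw [← Finset.sum_neg_distrib]
      apply Finset.sum_congr rfl; intro a _
      rw [hX a c a]; ring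
    have hy : (∑ a, ee a * Y a c a) = -∑ a, ee a * Y c a a := by
      rw [← Finset.sum_neg_distrib]
      apply Finset.sum_congr rfl; intro a _
      rw [hY a c a]; ring
    rw [hx, hy]; ring
  unfold Cb
  rw [t2]
  simp only [asym, Fin.sum_univ_four]
  ring

/-- Basis elements of `W`. -/
def bas (p q r : Idx) : T3 := fun a b c =>
  (if a = p ∧ b = q ∧ c = r then 1 else 0) - (if a = q ∧ b = p ∧ c = r then 1 else 0)

lemma bas_anti (p q r : Idx) : ∀ a b c, bas p q r a b c = - bas p q r b a c := by
  intro a b c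
  simp only [bas]
  have h1 : (a = p ∧ b = q ∧ c = r) ↔ (b = q ∧ a = p ∧ c = r) := by tauto
  have h2 : (a = q ∧ b = p ∧ c = r) ↔ (b = p ∧ a = q ∧ c = r) := by tauto
  rw [if_congr h1 rfl rfl, if_congr h2 rfl rfl]; ring

set_option maxHeartbeats 16000000 in
lemma nondeg (lam : ℝ) (hlam : lam ≠ 1) (X : T3) (hX : ∀ a b c, X a b c = -X b a c)
    (h : ∀ v : T3, (∀ a b c, v a b c = -v b a c) → Cb lam v X = 0) : X = 0 := by
  have E010 := h (bas 0 1 0) (bas_anti 0 1 0)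
  have E011 := h (bas 0 1 1) (bas_anti 0 1 1)
  have E012 := h (bas 0 1 2) (bas_anti 0 1 2)
  have E013 := h (bas 0 1 3) (bas_anti 0 1 3)
  have E020 := h (bas 0 2 0) (bas_anti 0 2 0)
  have E021 := h (bas 0 2 1) (bas_anti 0 2 1)
  have E022 := h (bas 0 2 2) (bas_anti 0 2 2)
  have E023 := h (bas 0 2 3) (bas_anti 0 2 3)
  have E030 := h (bas 0 3 0) (bas_anti 0 3 0)
  have E031 := h (bas 0 3 1) (bas_anti 0 3 1)
  have E032 := h (bas 0 3 2) (bas_anti 0 3 2)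
  have E033 := h (bas 0 3 3) (bas_anti 0 3 3)
  have E120 := h (bas 1 2 0) (bas_anti 1 2 0)
  have E121 := h (bas 1 2 1) (bas_anti 1 2 1)
  have E122 := h (bas 1 2 2) (bas_anti 1 2 2)
  have E123 := h (bas 1 2 3) (bas_anti 1 2 3)
  have E130 := h (bas 1 3 0) (bas_anti 1 3 0)
  have E131 := h (bas 1 3 1) (bas_anti 1 3 1)
  have E132 := h (bas 1 3 2) (bas_anti 1 3 2)
  have E133 := h (bas 1 3 3) (bas_anti 1 3 3)
  have E230 := h (bas 2 3 0) (bas_anti 2 3 0)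
  have E231 := h (bas 2 3 1) (bas_anti 2 3 1)
  have E232 := h (bas 2 3 2) (bas_anti 2 3 2)
  have E233 := h (bas 2 3 3) (bas_anti 2 3 3)
  simp (config := { decide := true }) only [Cb, bas, asym, Fin.sum_univ_four, ee, if_true,
    if_false, sub_zero, zero_sub, sub_self, mul_zero, zero_mul, mul_one, one_mul, mul_neg,
    neg_mul, neg_neg, add_zero, zero_add, neg_zero, neg_sub, zero_div] at E010 E011 E012 E013 E020 E021
  norm_num at E010 E011 E012 E013 E020 E021
  simp (config := { decide := true }) only [Cb, bas, asym, Fin.sum_univ_four, ee, if_true,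
    if_false, sub_zero, zero_sub, sub_self, mul_zero, zero_mul, mul_one, one_mul, mul_neg,
    neg_mul, neg_neg, add_zero, zero_add, neg_zero, neg_sub, zero_div] at E022 E023 E030 E031 E032 E033
  norm_num at E022 E023 E030 E031 E032 E033
  simp (config := { decide := true }) only [Cb, bas, asym, Fin.sum_univ_four, ee, if_true,
    if_false, sub_zero, zero_sub, sub_self, mul_zero, zero_mul, mul_one, one_mul, mul_neg,
    neg_mul, neg_neg, add_zero, zero_add, neg_zero, neg_sub, zero_div] at E120 E121 E122 E123 E130 E131
  norm_num at E120 E121 E122 E123 E130 E131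
  simp (config := { decide := true }) only [Cb, bas, asym, Fin.sum_univ_four, ee, if_true,
    if_false, sub_zero, zero_sub, sub_self, mul_zero, zero_mul, mul_one, one_mul, mul_neg,
    neg_mul, neg_neg, add_zero, zero_add, neg_zero, neg_sub, zero_div] at E132 E133 E230 E231 E232 E233
  norm_num at E132 E133 E230 E231 E232 E233
  have hA012 : X 0 1 2 - X 0 2 1 + X 1 2 0 - X 1 0 2 + X 2 0 1 - X 2 1 0 = 0 := by
    have key : (lam - 1) * (X 0 1 2 - X 0 2 1 + X 1 2 0 - X 1 0 2 + X 2 0 1 - X 2 1 0) = 0 := by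
      linear_combination (-1 : ℝ) * E012 + (1 : ℝ) * E021 + (-1 : ℝ) * E120
    rcases mul_eq_zero.mp key with h' | h'
    · exact absurd (by linarith) hlam
    · exact h'
  have hA013 : X 0 1 3 - X 0 3 1 + X 1 3 0 - X 1 0 3 + X 3 0 1 - X 3 1 0 = 0 := by
    have key : (lam - 1) * (X 0 1 3 - X 0 3 1 + X 1 3 0 - X 1 0 3 + X 3 0 1 - X 3 1 0) = 0 := by
      linear_combination (-1 : ℝ) * E013 + (1 : ℝ) * E031 + (-1 : ℝ) * E130
    rcases mul_eq_zero.mp key with h' | h'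
    · exact absurd (by linarith) hlam
    · exact h'
  have hA023 : X 0 2 3 - X 0 3 2 + X 2 3 0 - X 2 0 3 + X 3 0 2 - X 3 2 0 = 0 := by
    have key : (lam - 1) * (X 0 2 3 - X 0 3 2 + X 2 3 0 - X 2 0 3 + X 3 0 2 - X 3 2 0) = 0 := by
      linear_combination (-1 : ℝ) * E023 + (1 : ℝ) * E032 + (-1 : ℝ) * E230
    rcases mul_eq_zero.mp key with h' | h'
    · exact absurd (by linarith) hlam
    · exact h'
  have hA123 : X 1 2 3 - X 1 3 2 + X 2 3 1 - X 2 1 3 + X 3 1 2 - X 3 2 1 = 0 := by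
    have key : (lam - 1) * (X 1 2 3 - X 1 3 2 + X 2 3 1 - X 2 1 3 + X 3 1 2 - X 3 2 1) = 0 := by
      linear_combination (1 : ℝ) * E123 + (-1 : ℝ) * E132 + (1 : ℝ) * E231
    rcases mul_eq_zero.mp key with h' | h'
    · exact absurd (by linarith) hlam
    · exact h'
  have hc000 : X 0 0 0 = 0 := by
    linear_combination (1/2 : ℝ) * hX 0 0 0
  have hc001 : X 0 0 1 = 0 := by
    linear_combination (1/2 : ℝ) * hX 0 0 1
  have hc002 : X 0 0 2 = 0 := by
    linear_combination (1/2 : ℝ) * hX 0 0 2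
  have hc003 : X 0 0 3 = 0 := by
    linear_combination (1/2 : ℝ) * hX 0 0 3
  have hc010 : X 0 1 0 = 0 := by
    linear_combination (1/2 : ℝ) * E010 + (-1/2 : ℝ) * E122 + (-1/2 : ℝ) * E133 + (1/4 : ℝ) * hX 0 0 1 + (1/2 : ℝ) * hX 0 1 0 + (-1/4 : ℝ) * hX 1 1 1 + (-1/2 : ℝ) * hX 1 2 2 + (-1/2 : ℝ) * hX 1 3 3 + (1/4 : ℝ) * hX 2 2 1 + (1/4 : ℝ) * hX 3 3 1
  have hc011 : X 0 1 1 = 0 := by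
    linear_combination (-1/2 : ℝ) * E011 + (1/2 : ℝ) * E022 + (1/2 : ℝ) * E033 + (1/4 : ℝ) * hX 0 0 0 + (1/2 : ℝ) * hX 0 1 1 + (-1/2 : ℝ) * hX 0 2 2 + (-1/2 : ℝ) * hX 0 3 3 + (-1/4 : ℝ) * hX 1 1 0 + (1/4 : ℝ) * hX 2 2 0 + (1/4 : ℝ) * hX 3 3 0
  have hc012 : X 0 1 2 = 0 := by
    linear_combination (-2/3 : ℝ) * E012 + (-1/3 : ℝ) * E021 + (1/3 : ℝ) * E120 + (1/2 : ℝ) * hX 0 1 2 + (1/2 : ℝ) * hX 0 2 1 + (-1/2 : ℝ) * hX 1 2 0 + (1/6 : ℝ) * hA012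
  have hc013 : X 0 1 3 = 0 := by
    linear_combination (-2/3 : ℝ) * E013 + (-1/3 : ℝ) * E031 + (1/3 : ℝ) * E130 + (1/2 : ℝ) * hX 0 1 3 + (1/2 : ℝ) * hX 0 3 1 + (-1/2 : ℝ) * hX 1 3 0 + (1/6 : ℝ) * hA013
  have hc020 : X 0 2 0 = 0 := by
    linear_combination (1/2 : ℝ) * E020 + (1/2 : ℝ) * E121 + (-1/2 : ℝ) * E233 + (1/4 : ℝ) * hX 0 0 2 + (1/2 : ℝ) * hX 0 2 0 + (1/4 : ℝ) * hX 1 1 2 + (-1/2 : ℝ) * hX 1 2 1 + (-1/4 : ℝ) * hX 2 2 2 + (-1/2 : ℝ) * hX 2 3 3 + (1/4 : ℝ) * hX 3 3 2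
  have hc021 : X 0 2 1 = 0 := by
    linear_combination (-1/3 : ℝ) * E012 + (-2/3 : ℝ) * E021 + (-1/3 : ℝ) * E120 + (1/2 : ℝ) * hX 0 1 2 + (1/2 : ℝ) * hX 0 2 1 + (-1/2 : ℝ) * hX 1 2 0 + (-1/6 : ℝ) * hA012
  have hc022 : X 0 2 2 = 0 := by
    linear_combination (1/2 : ℝ) * E011 + (-1/2 : ℝ) * E022 + (1/2 : ℝ) * E033 + (1/4 : ℝ) * hX 0 0 0 + (-1/2 : ℝ) * hX 0 1 1 + (1/2 : ℝ) * hX 0 2 2 + (-1/2 : ℝ) * hX 0 3 3 + (1/4 : ℝ) * hX 1 1 0 + (-1/4 : ℝ) * hX 2 2 0 + (1/4 : ℝ) * hX 3 3 0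
  have hc023 : X 0 2 3 = 0 := by
    linear_combination (-2/3 : ℝ) * E023 + (-1/3 : ℝ) * E032 + (1/3 : ℝ) * E230 + (1/2 : ℝ) * hX 0 2 3 + (1/2 : ℝ) * hX 0 3 2 + (-1/2 : ℝ) * hX 2 3 0 + (1/6 : ℝ) * hA023
  have hc030 : X 0 3 0 = 0 := by
    linear_combination (1/2 : ℝ) * E030 + (1/2 : ℝ) * E131 + (1/2 : ℝ) * E232 + (1/4 : ℝ) * hX 0 0 3 + (1/2 : ℝ) * hX 0 3 0 + (1/4 : ℝ) * hX 1 1 3 + (-1/2 : ℝ) * hX 1 3 1 + (1/4 : ℝ) * hX 2 2 3 + (-1/2 : ℝ) * hX 2 3 2 + (-1/4 : ℝ) * hX 3 3 3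
  have hc031 : X 0 3 1 = 0 := by
    linear_combination (-1/3 : ℝ) * E013 + (-2/3 : ℝ) * E031 + (-1/3 : ℝ) * E130 + (1/2 : ℝ) * hX 0 1 3 + (1/2 : ℝ) * hX 0 3 1 + (-1/2 : ℝ) * hX 1 3 0 + (-1/6 : ℝ) * hA013
  have hc032 : X 0 3 2 = 0 := by
    linear_combination (-1/3 : ℝ) * E023 + (-2/3 : ℝ) * E032 + (-1/3 : ℝ) * E230 + (1/2 : ℝ) * hX 0 2 3 + (1/2 : ℝ) * hX 0 3 2 + (-1/2 : ℝ) * hX 2 3 0 + (-1/6 : ℝ) * hA023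
  have hc033 : X 0 3 3 = 0 := by
    linear_combination (1/2 : ℝ) * E011 + (1/2 : ℝ) * E022 + (-1/2 : ℝ) * E033 + (1/4 : ℝ) * hX 0 0 0 + (-1/2 : ℝ) * hX 0 1 1 + (-1/2 : ℝ) * hX 0 2 2 + (1/2 : ℝ) * hX 0 3 3 + (1/4 : ℝ) * hX 1 1 0 + (1/4 : ℝ) * hX 2 2 0 + (-1/4 : ℝ) * hX 3 3 0
  have hc100 : X 1 0 0 = 0 := by
    linear_combination (-1/2 : ℝ) * E010 + (1/2 : ℝ) * E122 + (1/2 : ℝ) * E133 + (-1/4 : ℝ) * hX 0 0 1 + (1/2 : ℝ) * hX 0 1 0 + (1/4 : ℝ) * hX 1 1 1 + (1/2 : ℝ) * hX 1 2 2 + (1/2 : ℝ) * hX 1 3 3 + (-1/4 : ℝ) * hX 2 2 1 + (-1/4 : ℝ) * hX 3 3 1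
  have hc101 : X 1 0 1 = 0 := by
    linear_combination (1/2 : ℝ) * E011 + (-1/2 : ℝ) * E022 + (-1/2 : ℝ) * E033 + (-1/4 : ℝ) * hX 0 0 0 + (1/2 : ℝ) * hX 0 1 1 + (1/2 : ℝ) * hX 0 2 2 + (1/2 : ℝ) * hX 0 3 3 + (1/4 : ℝ) * hX 1 1 0 + (-1/4 : ℝ) * hX 2 2 0 + (-1/4 : ℝ) * hX 3 3 0
  have hc102 : X 1 0 2 = 0 := by
    linear_combination (2/3 : ℝ) * E012 + (1/3 : ℝ) * E021 + (-1/3 : ℝ) * E120 + (1/2 : ℝ) * hX 0 1 2 + (-1/2 : ℝ) * hX 0 2 1 + (1/2 : ℝ) * hX 1 2 0 + (-1/6 : ℝ) * hA012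
  have hc103 : X 1 0 3 = 0 := by
    linear_combination (2/3 : ℝ) * E013 + (1/3 : ℝ) * E031 + (-1/3 : ℝ) * E130 + (1/2 : ℝ) * hX 0 1 3 + (-1/2 : ℝ) * hX 0 3 1 + (1/2 : ℝ) * hX 1 3 0 + (-1/6 : ℝ) * hA013
  have hc110 : X 1 1 0 = 0 := by
    linear_combination (1/2 : ℝ) * hX 1 1 0
  have hc111 : X 1 1 1 = 0 := by
    linear_combination (1/2 : ℝ) * hX 1 1 1
  have hc112 : X 1 1 2 = 0 := by
    linear_combination (1/2 : ℝ) * hX 1 1 2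
  have hc113 : X 1 1 3 = 0 := by
    linear_combination (1/2 : ℝ) * hX 1 1 3
  have hc120 : X 1 2 0 = 0 := by
    linear_combination (1/3 : ℝ) * E012 + (-1/3 : ℝ) * E021 + (-2/3 : ℝ) * E120 + (1/2 : ℝ) * hX 0 1 2 + (-1/2 : ℝ) * hX 0 2 1 + (1/2 : ℝ) * hX 1 2 0 + (1/6 : ℝ) * hA012
  have hc121 : X 1 2 1 = 0 := by
    linear_combination (1/2 : ℝ) * E020 + (1/2 : ℝ) * E121 + (1/2 : ℝ) * E233 + (1/4 : ℝ) * hX 0 0 2 + (-1/2 : ℝ) * hX 0 2 0 + (1/4 : ℝ) * hX 1 1 2 + (1/2 : ℝ) * hX 1 2 1 + (1/4 : ℝ) * hX 2 2 2 + (1/2 : ℝ) * hX 2 3 3 + (-1/4 : ℝ) * hX 3 3 2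
  have hc122 : X 1 2 2 = 0 := by
    linear_combination (-1/2 : ℝ) * E010 + (1/2 : ℝ) * E122 + (-1/2 : ℝ) * E133 + (-1/4 : ℝ) * hX 0 0 1 + (1/2 : ℝ) * hX 0 1 0 + (-1/4 : ℝ) * hX 1 1 1 + (1/2 : ℝ) * hX 1 2 2 + (-1/2 : ℝ) * hX 1 3 3 + (-1/4 : ℝ) * hX 2 2 1 + (1/4 : ℝ) * hX 3 3 1
  have hc123 : X 1 2 3 = 0 := by
    linear_combination (2/3 : ℝ) * E123 + (1/3 : ℝ) * E132 + (-1/3 : ℝ) * E231 + (1/2 : ℝ) * hX 1 2 3 + (1/2 : ℝ) * hX 1 3 2 + (-1/2 : ℝ) * hX 2 3 1 + (1/6 : ℝ) * hA123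
  have hc130 : X 1 3 0 = 0 := by
    linear_combination (1/3 : ℝ) * E013 + (-1/3 : ℝ) * E031 + (-2/3 : ℝ) * E130 + (1/2 : ℝ) * hX 0 1 3 + (-1/2 : ℝ) * hX 0 3 1 + (1/2 : ℝ) * hX 1 3 0 + (1/6 : ℝ) * hA013
  have hc131 : X 1 3 1 = 0 := by
    linear_combination (1/2 : ℝ) * E030 + (1/2 : ℝ) * E131 + (-1/2 : ℝ) * E232 + (1/4 : ℝ) * hX 0 0 3 + (-1/2 : ℝ) * hX 0 3 0 + (1/4 : ℝ) * hX 1 1 3 + (1/2 : ℝ) * hX 1 3 1 + (-1/4 : ℝ) * hX 2 2 3 + (1/2 : ℝ) * hX 2 3 2 + (1/4 : ℝ) * hX 3 3 3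
  have hc132 : X 1 3 2 = 0 := by
    linear_combination (1/3 : ℝ) * E123 + (2/3 : ℝ) * E132 + (1/3 : ℝ) * E231 + (1/2 : ℝ) * hX 1 2 3 + (1/2 : ℝ) * hX 1 3 2 + (-1/2 : ℝ) * hX 2 3 1 + (-1/6 : ℝ) * hA123
  have hc133 : X 1 3 3 = 0 := by
    linear_combination (-1/2 : ℝ) * E010 + (-1/2 : ℝ) * E122 + (1/2 : ℝ) * E133 + (-1/4 : ℝ) * hX 0 0 1 + (1/2 : ℝ) * hX 0 1 0 + (-1/4 : ℝ) * hX 1 1 1 + (-1/2 : ℝ) * hX 1 2 2 + (1/2 : ℝ) * hX 1 3 3 + (1/4 : ℝ) * hX 2 2 1 + (-1/4 : ℝ) * hX 3 3 1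
  have hc200 : X 2 0 0 = 0 := by
    linear_combination (-1/2 : ℝ) * E020 + (-1/2 : ℝ) * E121 + (1/2 : ℝ) * E233 + (-1/4 : ℝ) * hX 0 0 2 + (1/2 : ℝ) * hX 0 2 0 + (-1/4 : ℝ) * hX 1 1 2 + (1/2 : ℝ) * hX 1 2 1 + (1/4 : ℝ) * hX 2 2 2 + (1/2 : ℝ) * hX 2 3 3 + (-1/4 : ℝ) * hX 3 3 2
  have hc201 : X 2 0 1 = 0 := by
    linear_combination (1/3 : ℝ) * E012 + (2/3 : ℝ) * E021 + (1/3 : ℝ) * E120 + (-1/2 : ℝ) * hX 0 1 2 + (1/2 : ℝ) * hX 0 2 1 + (1/2 : ℝ) * hX 1 2 0 + (1/6 : ℝ) * hA012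
  have hc202 : X 2 0 2 = 0 := by
    linear_combination (-1/2 : ℝ) * E011 + (1/2 : ℝ) * E022 + (-1/2 : ℝ) * E033 + (-1/4 : ℝ) * hX 0 0 0 + (1/2 : ℝ) * hX 0 1 1 + (1/2 : ℝ) * hX 0 2 2 + (1/2 : ℝ) * hX 0 3 3 + (-1/4 : ℝ) * hX 1 1 0 + (1/4 : ℝ) * hX 2 2 0 + (-1/4 : ℝ) * hX 3 3 0
  have hc203 : X 2 0 3 = 0 := by
    linear_combination (2/3 : ℝ) * E023 + (1/3 : ℝ) * E032 + (-1/3 : ℝ) * E230 + (1/2 : ℝ) * hX 0 2 3 + (-1/2 : ℝ) * hX 0 3 2 + (1/2 : ℝ) * hX 2 3 0 + (-1/6 : ℝ) * hA023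
  have hc210 : X 2 1 0 = 0 := by
    linear_combination (-1/3 : ℝ) * E012 + (1/3 : ℝ) * E021 + (2/3 : ℝ) * E120 + (-1/2 : ℝ) * hX 0 1 2 + (1/2 : ℝ) * hX 0 2 1 + (1/2 : ℝ) * hX 1 2 0 + (-1/6 : ℝ) * hA012
  have hc211 : X 2 1 1 = 0 := by
    linear_combination (-1/2 : ℝ) * E020 + (-1/2 : ℝ) * E121 + (-1/2 : ℝ) * E233 + (-1/4 : ℝ) * hX 0 0 2 + (1/2 : ℝ) * hX 0 2 0 + (-1/4 : ℝ) * hX 1 1 2 + (1/2 : ℝ) * hX 1 2 1 + (-1/4 : ℝ) * hX 2 2 2 + (-1/2 : ℝ) * hX 2 3 3 + (1/4 : ℝ) * hX 3 3 2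
  have hc212 : X 2 1 2 = 0 := by
    linear_combination (1/2 : ℝ) * E010 + (-1/2 : ℝ) * E122 + (1/2 : ℝ) * E133 + (1/4 : ℝ) * hX 0 0 1 + (-1/2 : ℝ) * hX 0 1 0 + (1/4 : ℝ) * hX 1 1 1 + (1/2 : ℝ) * hX 1 2 2 + (1/2 : ℝ) * hX 1 3 3 + (1/4 : ℝ) * hX 2 2 1 + (-1/4 : ℝ) * hX 3 3 1
  have hc213 : X 2 1 3 = 0 := by
    linear_combination (-2/3 : ℝ) * E123 + (-1/3 : ℝ) * E132 + (1/3 : ℝ) * E231 + (1/2 : ℝ) * hX 1 2 3 + (-1/2 : ℝ) * hX 1 3 2 + (1/2 : ℝ) * hX 2 3 1 + (-1/6 : ℝ) * hA123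
  have hc220 : X 2 2 0 = 0 := by
    linear_combination (1/2 : ℝ) * hX 2 2 0
  have hc221 : X 2 2 1 = 0 := by
    linear_combination (1/2 : ℝ) * hX 2 2 1
  have hc222 : X 2 2 2 = 0 := by
    linear_combination (1/2 : ℝ) * hX 2 2 2
  have hc223 : X 2 2 3 = 0 := by
    linear_combination (1/2 : ℝ) * hX 2 2 3
  have hc230 : X 2 3 0 = 0 := by
    linear_combination (1/3 : ℝ) * E023 + (-1/3 : ℝ) * E032 + (-2/3 : ℝ) * E230 + (1/2 : ℝ) * hX 0 2 3 + (-1/2 : ℝ) * hX 0 3 2 + (1/2 : ℝ) * hX 2 3 0 + (1/6 : ℝ) * hA023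
  have hc231 : X 2 3 1 = 0 := by
    linear_combination (-1/3 : ℝ) * E123 + (1/3 : ℝ) * E132 + (2/3 : ℝ) * E231 + (1/2 : ℝ) * hX 1 2 3 + (-1/2 : ℝ) * hX 1 3 2 + (1/2 : ℝ) * hX 2 3 1 + (1/6 : ℝ) * hA123
  have hc232 : X 2 3 2 = 0 := by
    linear_combination (1/2 : ℝ) * E030 + (-1/2 : ℝ) * E131 + (1/2 : ℝ) * E232 + (1/4 : ℝ) * hX 0 0 3 + (-1/2 : ℝ) * hX 0 3 0 + (-1/4 : ℝ) * hX 1 1 3 + (1/2 : ℝ) * hX 1 3 1 + (1/4 : ℝ) * hX 2 2 3 + (1/2 : ℝ) * hX 2 3 2 + (1/4 : ℝ) * hX 3 3 3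
  have hc233 : X 2 3 3 = 0 := by
    linear_combination (-1/2 : ℝ) * E020 + (1/2 : ℝ) * E121 + (1/2 : ℝ) * E233 + (-1/4 : ℝ) * hX 0 0 2 + (1/2 : ℝ) * hX 0 2 0 + (1/4 : ℝ) * hX 1 1 2 + (-1/2 : ℝ) * hX 1 2 1 + (-1/4 : ℝ) * hX 2 2 2 + (1/2 : ℝ) * hX 2 3 3 + (-1/4 : ℝ) * hX 3 3 2
  have hc300 : X 3 0 0 = 0 := by
    linear_combination (-1/2 : ℝ) * E030 + (-1/2 : ℝ) * E131 + (-1/2 : ℝ) * E232 + (-1/4 : ℝ) * hX 0 0 3 + (1/2 : ℝ) * hX 0 3 0 + (-1/4 : ℝ) * hX 1 1 3 + (1/2 : ℝ) * hX 1 3 1 + (-1/4 : ℝ) * hX 2 2 3 + (1/2 : ℝ) * hX 2 3 2 + (1/4 : ℝ) * hX 3 3 3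
  have hc301 : X 3 0 1 = 0 := by
    linear_combination (1/3 : ℝ) * E013 + (2/3 : ℝ) * E031 + (1/3 : ℝ) * E130 + (-1/2 : ℝ) * hX 0 1 3 + (1/2 : ℝ) * hX 0 3 1 + (1/2 : ℝ) * hX 1 3 0 + (1/6 : ℝ) * hA013
  have hc302 : X 3 0 2 = 0 := by
    linear_combination (1/3 : ℝ) * E023 + (2/3 : ℝ) * E032 + (1/3 : ℝ) * E230 + (-1/2 : ℝ) * hX 0 2 3 + (1/2 : ℝ) * hX 0 3 2 + (1/2 : ℝ) * hX 2 3 0 + (1/6 : ℝ) * hA023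
  have hc303 : X 3 0 3 = 0 := by
    linear_combination (-1/2 : ℝ) * E011 + (-1/2 : ℝ) * E022 + (1/2 : ℝ) * E033 + (-1/4 : ℝ) * hX 0 0 0 + (1/2 : ℝ) * hX 0 1 1 + (1/2 : ℝ) * hX 0 2 2 + (1/2 : ℝ) * hX 0 3 3 + (-1/4 : ℝ) * hX 1 1 0 + (-1/4 : ℝ) * hX 2 2 0 + (1/4 : ℝ) * hX 3 3 0
  have hc310 : X 3 1 0 = 0 := by
    linear_combination (-1/3 : ℝ) * E013 + (1/3 : ℝ) * E031 + (2/3 : ℝ) * E130 + (-1/2 : ℝ) * hX 0 1 3 + (1/2 : ℝ) * hX 0 3 1 + (1/2 : ℝ) * hX 1 3 0 + (-1/6 : ℝ) * hA013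
  have hc311 : X 3 1 1 = 0 := by
    linear_combination (-1/2 : ℝ) * E030 + (-1/2 : ℝ) * E131 + (1/2 : ℝ) * E232 + (-1/4 : ℝ) * hX 0 0 3 + (1/2 : ℝ) * hX 0 3 0 + (-1/4 : ℝ) * hX 1 1 3 + (1/2 : ℝ) * hX 1 3 1 + (1/4 : ℝ) * hX 2 2 3 + (-1/2 : ℝ) * hX 2 3 2 + (-1/4 : ℝ) * hX 3 3 3
  have hc312 : X 3 1 2 = 0 := by
    linear_combination (-1/3 : ℝ) * E123 + (-2/3 : ℝ) * E132 + (-1/3 : ℝ) * E231 + (-1/2 : ℝ) * hX 1 2 3 + (1/2 : ℝ) * hX 1 3 2 + (1/2 : ℝ) * hX 2 3 1 + (1/6 : ℝ) * hA123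
  have hc313 : X 3 1 3 = 0 := by
    linear_combination (1/2 : ℝ) * E010 + (1/2 : ℝ) * E122 + (-1/2 : ℝ) * E133 + (1/4 : ℝ) * hX 0 0 1 + (-1/2 : ℝ) * hX 0 1 0 + (1/4 : ℝ) * hX 1 1 1 + (1/2 : ℝ) * hX 1 2 2 + (1/2 : ℝ) * hX 1 3 3 + (-1/4 : ℝ) * hX 2 2 1 + (1/4 : ℝ) * hX 3 3 1
  have hc320 : X 3 2 0 = 0 := by
    linear_combination (-1/3 : ℝ) * E023 + (1/3 : ℝ) * E032 + (2/3 : ℝ) * E230 + (-1/2 : ℝ) * hX 0 2 3 + (1/2 : ℝ) * hX 0 3 2 + (1/2 : ℝ) * hX 2 3 0 + (-1/6 : ℝ) * hA023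
  have hc321 : X 3 2 1 = 0 := by
    linear_combination (1/3 : ℝ) * E123 + (-1/3 : ℝ) * E132 + (-2/3 : ℝ) * E231 + (-1/2 : ℝ) * hX 1 2 3 + (1/2 : ℝ) * hX 1 3 2 + (1/2 : ℝ) * hX 2 3 1 + (-1/6 : ℝ) * hA123
  have hc322 : X 3 2 2 = 0 := by
    linear_combination (-1/2 : ℝ) * E030 + (1/2 : ℝ) * E131 + (-1/2 : ℝ) * E232 + (-1/4 : ℝ) * hX 0 0 3 + (1/2 : ℝ) * hX 0 3 0 + (1/4 : ℝ) * hX 1 1 3 + (-1/2 : ℝ) * hX 1 3 1 + (-1/4 : ℝ) * hX 2 2 3 + (1/2 : ℝ) * hX 2 3 2 + (-1/4 : ℝ) * hX 3 3 3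
  have hc323 : X 3 2 3 = 0 := by
    linear_combination (1/2 : ℝ) * E020 + (-1/2 : ℝ) * E121 + (-1/2 : ℝ) * E233 + (1/4 : ℝ) * hX 0 0 2 + (-1/2 : ℝ) * hX 0 2 0 + (-1/4 : ℝ) * hX 1 1 2 + (1/2 : ℝ) * hX 1 2 1 + (1/4 : ℝ) * hX 2 2 2 + (1/2 : ℝ) * hX 2 3 3 + (1/4 : ℝ) * hX 3 3 2
  have hc330 : X 3 3 0 = 0 := by
    linear_combination (1/2 : ℝ) * hX 3 3 0
  have hc331 : X 3 3 1 = 0 := by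
    linear_combination (1/2 : ℝ) * hX 3 3 1
  have hc332 : X 3 3 2 = 0 := by
    linear_combination (1/2 : ℝ) * hX 3 3 2
  have hc333 : X 3 3 3 = 0 := by
    linear_combination (1/2 : ℝ) * hX 3 3 3
  funext a b c
  show X a b c = (0 : ℝ)
  fin_cases a <;> fin_cases b <;> fin_cases c <;> assumption

/-- The bilinear form `Cb` as a bilinear map on `Wsub`. -/
noncomputable def Phi (lam : ℝ) : Wsub →ₗ[ℝ] Wsub →ₗ[ℝ] ℝ :=
  LinearMap.mk₂ ℝ (fun X Y : Wsub => Cb lam (X : T3) (Y : T3))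
    (fun X X' Y => by
      show Cb lam ((X + X' : Wsub) : T3) _ = _
      rw [Submodule.coe_add, Cb_add_left])
    (fun r X Y => by
      show Cb lam ((r • X : Wsub) : T3) _ = r • Cb lam _ _
      rw [Submodule.coe_smul, smul_eq_mul, Cb_smul_left])
    (fun X Y Y' => by
      show Cb lam _ ((Y + Y' : Wsub) : T3) = _
      rw [Submodule.coe_add, Cb_add_right])
    (fun r X Y => by
      show Cb lam _ ((r • Y : Wsub) : T3) = r • Cb lam _ _
      rw [Submodule.coe_smul, smul_eq_mul, Cb_smul_right])

noncomputable def PsiL (lam : ℝ) : Wsub →ₗ[ℝ] (Wsub →L[ℝ] ℝ) where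
  toFun := fun X => ⟨Phi lam X, (Phi lam X).continuous_of_finiteDimensional⟩
  map_add' := by intro x y; ext v; simp [map_add]
  map_smul' := by intro r x; ext v; simp [map_smul]

noncomputable def Phic (lam : ℝ) : Wsub →L[ℝ] Wsub →L[ℝ] ℝ :=
  ⟨PsiL lam, by exact LinearMap.continuous_of_finiteDimensional (𝕜 := ℝ) (E := Wsub) (F' := Wsub →L[ℝ] ℝ) (PsiL lam)⟩

lemma Phic_apply (lam : ℝ) (X Y : Wsub) : Phic lam X Y = Cb lam (X : T3) (Y : T3) := rfl

/-- For λ ≠ 1, the (Fréchet) derivative of the quadratic functional `q`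
on the space `W` of tensors antisymmetric in their first two indices vanishes at `H` iff
`H = K`; i.e. `H = K` is the unique critical point of `q` on `W`. -/
theorem statement14 (lam : ℝ) (hlam : lam ≠ 1) (K : Wsub) :
    ∀ H : Wsub, fderiv ℝ (fun H : Wsub => qfun lam (K : T3) (H : T3)) H = 0 ↔ H = K := by
  intro H
  classical
  have hm : ∀ Z : Wsub, ∀ a b c, (Z : T3) a b c = -(Z : T3) b a c := fun Z => Z.2
  have funeq : (fun J : Wsub => qfun lam (K : T3) (J : T3))
      = fun J : Wsub => Phic lam J J - 2 * Phic lam J K := by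
    funext J
    rw [qfun_eq lam (K : T3) (J : T3)]
    rfl
  have hD : HasFDerivAt (fun J : Wsub => Phic lam J J - 2 * Phic lam J K)
      ((((Phic lam).isBoundedBilinearMap.deriv (H, H)).comp
          ((ContinuousLinearMap.id ℝ Wsub).prod (ContinuousLinearMap.id ℝ Wsub)))
        - (2 : ℝ) • ((Phic lam).flip K)) H := by
    have h1 : HasFDerivAt (fun J : Wsub => Phic lam J J)
        (((Phic lam).isBoundedBilinearMap.deriv (H, H)).comp
          ((ContinuousLinearMap.id ℝ Wsub).prod (ContinuousLinearMap.id ℝ Wsub))) H := by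
      have hp : HasFDerivAt (fun J : Wsub => (J, J))
          ((ContinuousLinearMap.id ℝ Wsub).prod (ContinuousLinearMap.id ℝ Wsub)) H :=
        HasFDerivAt.prodMk (hasFDerivAt_id H) (hasFDerivAt_id H)
      have h0 := HasFDerivAt.comp (f := fun J : Wsub => (J, J))
        (g := fun p : Wsub × Wsub => Phic lam p.1 p.2) H
        ((Phic lam).isBoundedBilinearMap.hasFDerivAt (H, H)) hp
      exact h0
    have h2 : HasFDerivAt (fun J : Wsub => Phic lam J K) ((Phic lam).flip K) H := by
      have := ((Phic lam).flip K).hasFDerivAt (x := H)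
      exact this
    exact h1.sub (h2.const_mul 2)
  rw [funeq, hD.fderiv]
  constructor
  · intro h0
    have hv : ∀ v : Wsub, Cb lam (v : T3) ((H - K : Wsub) : T3) = 0 := by
      intro v
      have h1 : ((((Phic lam).isBoundedBilinearMap.deriv (H, H)).comp
          ((ContinuousLinearMap.id ℝ Wsub).prod (ContinuousLinearMap.id ℝ Wsub)))
        - (2 : ℝ) • ((Phic lam).flip K)) v = (0 : Wsub →L[ℝ] ℝ) v := by rw [h0]
      have h2 : Phic lam H v + Phic lam v H - 2 * Phic lam v K = 0 := by
        simpa only [ContinuousLinearMap.sub_apply, ContinuousLinearMap.coe_comp',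
          Function.comp_apply, ContinuousLinearMap.prod_apply, ContinuousLinearMap.coe_id',
          id_eq, IsBoundedBilinearMap.deriv_apply, ContinuousLinearMap.smul_apply,
          smul_eq_mul, ContinuousLinearMap.zero_apply, ContinuousLinearMap.flip_apply] using h1
      have h4 : Phic lam v (H - K) = Phic lam v H - Phic lam v K := map_sub _ _ _
      have hsym := Cb_symm lam (H : T3) (v : T3) (hm H) (hm v)
      rw [Phic_apply, Phic_apply, Phic_apply] at h2
      rw [Phic_apply, Phic_apply, Phic_apply] at h4
      rw [h4]
      linarith [hsym]
    have hz : ((H - K : Wsub) : T3) = 0 :=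
      nondeg lam hlam _ (hm (H - K)) (fun v hv' => hv ⟨v, hv'⟩)
    exact sub_eq_zero.mp (ZeroMemClass.coe_eq_zero.mp hz)
  · rintro rfl
    ext v
    simp only [ContinuousLinearMap.sub_apply, ContinuousLinearMap.coe_comp',
      Function.comp_apply, ContinuousLinearMap.prod_apply, ContinuousLinearMap.coe_id',
      id_eq, IsBoundedBilinearMap.deriv_apply, ContinuousLinearMap.smul_apply,
      smul_eq_mul, ContinuousLinearMap.zero_apply, ContinuousLinearMap.flip_apply,
      Phic_apply]
    first
    | (have hsym := Cb_symm lam (H : T3) (v : T3) (hm H) (hm v)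
       linarith [hsym])
    | (have hsym := Cb_symm lam (K : T3) (v : T3) (hm K) (hm v)
       linarith [hsym])
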